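/- Let f : [0,1] → ℝ be continuous and piecewise C¹ with minimum a and maximum b on [0,1]. Then ∫_a^b |π₀(f⁻¹((-∞,t]))| dt ≤ V(f), where |π₀(S)| denotes the number of path-components of S (possibly infinite) and V(f) = ∫₀¹ |f'(t)| dt is the total variation of f. In particular the integrand is finite for almost every t. -/

import Mathlib

open scoped ENNReal
open Set MeasureTheory

/-- A function `[0,1] → ℝ` is piecewise C¹: continuous on `[0,1]`, and there are finitely
many closed intervals covering `[0,1]` on whose interiors it is C¹. -/
def PiecewiseC1Real (f : ℝ → ℝ) : Prop :=
  ContinuousOn f (Set.Icc 0 1) ∧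
    ∃ (k : ℕ) (u v : Fin k → ℝ),
      Set.Icc (0 : ℝ) 1 ⊆ ⋃ i, Set.Icc (u i) (v i) ∧
      ∀ i, ContDiffOn ℝ 1 f (Set.Ioo (u i) (v i))

namespace VarProof

lemma sum_range_two_mul {M : Type*} [AddCommMonoid M] (g : ℕ → M) (n : ℕ) :
    ∑ j ∈ Finset.range (2 * n), g j = ∑ j ∈ Finset.range n, (g (2 * j) + g (2 * j + 1)) := by
  induction n with
  | zero => simp
  | succ n ih =>
    rw [Nat.mul_succ, Finset.sum_range_succ, Finset.sum_range_succ, Finset.sum_range_succ, ← ih,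
      ← add_assoc]

noncomputable def cInd (f : ℝ → ℝ) (l r t : ℝ) : ℝ≥0∞ :=
  (Set.Ico (sInf (f '' Set.Icc l r)) (f l)).indicator (fun _ => 1) t

noncomputable def DD (f : ℝ → ℝ) (k : ℕ) (t : ℝ) : ℝ≥0∞ :=
  ∑ j ∈ Finset.range (2 ^ k),
    cInd f (j * ((2 : ℝ) ^ k)⁻¹) ((j + 1) * ((2 : ℝ) ^ k)⁻¹) t

lemma measurable_cInd (f : ℝ → ℝ) (l r : ℝ) : Measurable (cInd f l r) :=
  (measurable_const.indicator measurableSet_Ico)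

lemma measurable_DD (f : ℝ → ℝ) (k : ℕ) : Measurable (DD f k) := by
  apply Finset.measurable_sum
  intro j _
  exact measurable_cInd f _ _

lemma lintegral_cInd (f : ℝ → ℝ) (l r : ℝ) :
    ∫⁻ t, cInd f l r t = ENNReal.ofReal (f l - sInf (f '' Set.Icc l r)) := by
  unfold cInd
  rw [lintegral_indicator measurableSet_Ico]
  simp [Real.volume_Ico]

lemma exists_injective_of_le_card {α : Type} {n : ℕ} (h : (n : ℕ∞) ≤ ENat.card α) :
    ∃ g : Fin n → α, Function.Injective g := by
  have h' : (n : Cardinal) ≤ Cardinal.mk α := by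
    rwa [ENat.card, Cardinal.natCast_le_toENat_iff] at h
  have h'' : Cardinal.mk (Fin n) ≤ Cardinal.mk α := by simpa using h'
  rw [Cardinal.le_def] at h''
  obtain ⟨g⟩ := h''
  exact ⟨g, g.injective⟩

variable {f : ℝ → ℝ}

lemma cInd_split {l m r : ℝ} (hlm : l ≤ m) (hmr : m ≤ r)
    (hc : ContinuousOn f (Set.Icc l r)) (t : ℝ) :
    cInd f l r t ≤ cInd f l m t + cInd f m r t := by
  classical
  have h1 : Set.Icc l m ⊆ Set.Icc l r := Set.Icc_subset_Icc le_rfl hmr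
  have h2 : Set.Icc m r ⊆ Set.Icc l r := Set.Icc_subset_Icc hlm le_rfl
  have hlr : l ≤ r := hlm.trans hmr
  have hcomp : IsCompact (Set.Icc l r) := isCompact_Icc
  have hb : BddBelow (f '' Set.Icc l r) :=
    ((hcomp.image_of_continuousOn hc).bddBelow)
  have hb1 : BddBelow (f '' Set.Icc l m) := hb.mono (Set.image_mono (f := f) h1)
  have hb2 : BddBelow (f '' Set.Icc m r) := hb.mono (Set.image_mono (f := f) h2)
  have hne1 : (f '' Set.Icc l m).Nonempty :=
    (Set.nonempty_Icc.2 hlm).image f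
  have hne2 : (f '' Set.Icc m r).Nonempty :=
    (Set.nonempty_Icc.2 hmr).image f
  have hunion : Set.Icc l r = Set.Icc l m ∪ Set.Icc m r :=
    (Set.Icc_union_Icc_eq_Icc hlm hmr).symm
  have hinf : sInf (f '' Set.Icc l r)
      = sInf (f '' Set.Icc l m) ⊓ sInf (f '' Set.Icc m r) := by
    rw [hunion, Set.image_union]
    exact csInf_union hb1 hne1 hb2 hne2
  by_cases ht : t ∈ Set.Ico (sInf (f '' Set.Icc l r)) (f l)
  · -- t is in the big indicator's support
    rcases ht with ⟨htl, htr⟩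
    rw [hinf] at htl
    by_cases h1t : sInf (f '' Set.Icc l m) ≤ t
    · have : cInd f l m t = 1 := by
        unfold cInd; rw [Set.indicator_of_mem (Set.mem_Ico.mpr ⟨h1t, htr⟩)]
      calc cInd f l r t ≤ 1 := by
            unfold cInd Set.indicator; split <;> simp
        _ ≤ cInd f l m t + cInd f m r t := by rw [this]; exact le_self_add
    · push_neg at h1t
      have h2t : sInf (f '' Set.Icc m r) ≤ t := by
        rcases inf_le_iff.mp htl with h | h
        · exact absurd h (not_le.mpr h1t)
        · exact h
      have hfm : t < f m := by
        have : sInf (f '' Set.Icc l m) ≤ f m :=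
          csInf_le hb1 ⟨m, ⟨hlm, le_rfl⟩, rfl⟩
        exact lt_of_lt_of_le h1t this
      have : cInd f m r t = 1 := by
        unfold cInd; rw [Set.indicator_of_mem (Set.mem_Ico.mpr ⟨h2t, hfm⟩)]
      calc cInd f l r t ≤ 1 := by
            unfold cInd Set.indicator; split <;> simp
        _ ≤ cInd f l m t + cInd f m r t := by rw [this]; exact le_add_self
  · unfold cInd; rw [Set.indicator_of_notMem ht]
    exact zero_le


lemma DD_mono (hc : ContinuousOn f (Set.Icc 0 1)) : Monotone (DD f) := by
  apply monotone_nat_of_le_succ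
  intro k t
  have h2k : (0:ℝ) < 2 ^ k := by positivity
  have hc' : (0:ℝ) < ((2:ℝ) ^ (k+1))⁻¹ := by positivity
  have ec : ((2:ℝ)^k)⁻¹ = 2 * ((2:ℝ)^(k+1))⁻¹ := by
    rw [pow_succ]; field_simp
  rw [DD, DD, show (2:ℕ)^(k+1) = 2 * 2^k by ring, sum_range_two_mul
    (fun j => cInd f (j * ((2 : ℝ) ^ (k+1))⁻¹) ((j + 1) * ((2 : ℝ) ^ (k+1))⁻¹) t) (2^k)]
  apply Finset.sum_le_sum
  intro j hj
  have hj' : (j:ℝ) + 1 ≤ 2^k := by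
    have := Finset.mem_range.mp hj
    exact_mod_cast Nat.succ_le_of_lt this
  simp only []
  have e1 : ((2*j:ℕ) : ℝ) * ((2 : ℝ) ^ (k+1))⁻¹ = (j:ℝ) * ((2:ℝ)^k)⁻¹ := by
    push_cast; rw [ec]; ring
  have e3 : (((2*j:ℕ):ℝ) + 1 + 1) * ((2 : ℝ) ^ (k+1))⁻¹ = ((j:ℝ)+1) * ((2:ℝ)^k)⁻¹ := by
    push_cast; rw [ec]; ring
  rw [← e1, ← e3]
  have e2 : ((2*j + 1:ℕ) : ℝ) = ((2*j:ℕ):ℝ) + 1 := by push_cast; ring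
  rw [e2]
  have e4 : ((2*j:ℕ):ℝ) + 1 + 1 = (((2*j:ℕ):ℝ) + 1) + 1 := by ring
  rw [e4]
  have hlm : ((2*j:ℕ) : ℝ) * ((2 : ℝ) ^ (k+1))⁻¹ ≤ (((2*j:ℕ):ℝ) + 1) * ((2 : ℝ) ^ (k+1))⁻¹ := by
    nlinarith
  have hmr : (((2*j:ℕ):ℝ) + 1) * ((2 : ℝ) ^ (k+1))⁻¹ ≤ (((2*j:ℕ):ℝ) + 1 + 1) * ((2 : ℝ) ^ (k+1))⁻¹ := by
    nlinarith
  have hsub : Set.Icc (((2*j:ℕ) : ℝ) * ((2 : ℝ) ^ (k+1))⁻¹) ((((2*j:ℕ):ℝ) + 1 + 1) * ((2 : ℝ) ^ (k+1))⁻¹)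
      ⊆ Set.Icc 0 1 := by
    apply Set.Icc_subset_Icc
    · positivity
    · rw [e3]
      calc ((j:ℝ)+1) * ((2:ℝ)^k)⁻¹ ≤ (2:ℝ)^k * ((2:ℝ)^k)⁻¹ := by
            apply mul_le_mul_of_nonneg_right hj' (by positivity)
        _ = 1 := by field_simp
  exact cInd_split hlm hmr (hc.mono hsub) t


lemma crossing_count (hc : ContinuousOn f (Set.Icc 0 1)) (t : ℝ) (m : ℕ)
    (y x : Fin m → ℝ)
    (hcond : ∀ i, 0 ≤ y i ∧ y i < x i ∧ x i ≤ 1 ∧ t < f (y i) ∧ f (x i) ≤ t)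
    (horder : ∀ i j, i < j → x i ≤ y j) :
    (m : ℝ≥0∞) ≤ ⨆ k, DD f k t := by
  rcases Nat.eq_zero_or_pos m with hm | hm
  · simp [hm]
  haveI : Nonempty (Fin m) := Fin.pos_iff_nonempty.mp hm
  -- the sublevel crossing points
  set A : Fin m → Set ℝ := fun i => {z | y i ≤ z ∧ z ≤ x i ∧ f z ≤ t} with hA
  have hAsub : ∀ i, A i ⊆ Set.Icc (y i) (x i) := fun i z hz => ⟨hz.1, hz.2.1⟩
  have hA01 : ∀ i, Set.Icc (y i) (x i) ⊆ Set.Icc (0:ℝ) 1 := fun i =>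
    Set.Icc_subset_Icc (hcond i).1 (hcond i).2.2.1
  have hAclosed : ∀ i, IsClosed (A i) := by
    intro i
    have h1 : IsClosed (Set.Icc (0:ℝ) 1 ∩ f ⁻¹' (Set.Iic t)) :=
      hc.preimage_isClosed_of_isClosed isClosed_Icc isClosed_Iic
    have : A i = Set.Icc (y i) (x i) ∩ (Set.Icc (0:ℝ) 1 ∩ f ⁻¹' (Set.Iic t)) := by
      ext z
      constructor
      · intro hz
        exact ⟨⟨hz.1, hz.2.1⟩, hA01 i ⟨hz.1, hz.2.1⟩, hz.2.2⟩
      · rintro ⟨⟨h1, h2⟩, _, h3⟩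
        exact ⟨h1, h2, h3⟩
    rw [this]
    exact isClosed_Icc.inter h1
  have hAne : ∀ i, (A i).Nonempty := fun i =>
    ⟨x i, (hcond i).2.1.le, le_rfl, (hcond i).2.2.2.2⟩
  have hAbdd : ∀ i, BddBelow (A i) := fun i =>
    (bddBelow_Icc).mono (hAsub i)
  set c : Fin m → ℝ := fun i => sInf (A i) with hcdef
  have hcmem : ∀ i, c i ∈ A i := fun i => (hAclosed i).csInf_mem (hAne i) (hAbdd i)
  have hyc : ∀ i, y i < c i := by
    intro i
    rcases (hcmem i).1.lt_or_eq with h | h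
    · exact h
    · exact absurd ((h ▸ (hcmem i).2.2) : f (y i) ≤ t) (not_le.mpr (hcond i).2.2.2.1)
  have hcx : ∀ i, c i ≤ x i := fun i => (hcmem i).2.1
  have hlt : ∀ i z, y i ≤ z → z < c i → t < f z := by
    intro i z h1 h2
    by_contra h
    push_neg at h
    have : z ∈ A i := ⟨h1, (h2.trans_le (hcx i)).le, h⟩
    exact absurd (csInf_le (hAbdd i) this) (not_le.mpr h2)
  -- choose the dyadic scale
  set δ : ℝ := Finset.univ.inf' Finset.univ_nonempty (fun i => c i - y i) with hδdef
  have hδpos : 0 < δ := by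
    rw [hδdef, Finset.lt_inf'_iff]
    intro i _
    linarith [hyc i]
  have hδle : ∀ i, δ ≤ c i - y i := fun i =>
    Finset.inf'_le _ (Finset.mem_univ i)
  obtain ⟨k, hk⟩ := pow_unbounded_of_one_lt (δ⁻¹ : ℝ) (by norm_num : (1:ℝ) < 2)
  have h2k : (0:ℝ) < 2 ^ k := by positivity
  have hmesh : ((2:ℝ) ^ k)⁻¹ < δ := by
    rw [inv_lt_comm₀ h2k hδpos] at *
    exact hk
  refine le_trans ?_ (le_iSup _ k)
  -- basic facts about each crossing point
  have hc0 : ∀ i, 0 < c i := fun i => lt_of_le_of_lt (hcond i).1 (hyc i)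
  have hc1 : ∀ i, c i ≤ 1 := fun i => le_trans (hcx i) (hcond i).2.2.1
  set jj : Fin m → ℕ := fun i => ⌈c i * 2 ^ k⌉₊ - 1 with hjjdef
  have hceil_pos : ∀ i, 1 ≤ ⌈c i * 2 ^ k⌉₊ := fun i =>
    Nat.ceil_pos.mpr (by nlinarith [hc0 i])
  have hjjcast : ∀ i, ((jj i : ℝ)) = (⌈c i * 2 ^ k⌉₊ : ℝ) - 1 := by
    intro i
    rw [hjjdef]
    push_cast [Nat.cast_sub (hceil_pos i)]
    ring
  set l : Fin m → ℝ := fun i => (jj i : ℝ) * ((2:ℝ) ^ k)⁻¹ with hldef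
  set r : Fin m → ℝ := fun i => ((jj i : ℝ) + 1) * ((2:ℝ) ^ k)⁻¹ with hrdef
  have hlc : ∀ i, l i < c i := by
    intro i
    rw [hldef]
    simp only [hjjcast]
    have h1 := Nat.ceil_lt_add_one (by nlinarith [hc0 i] : (0:ℝ) ≤ c i * 2 ^ k)
    rw [show ((⌈c i * 2 ^ k⌉₊:ℝ) - 1) * ((2:ℝ)^k)⁻¹ = ((⌈c i * 2 ^ k⌉₊:ℝ) - 1) / 2^k from by ring,
      div_lt_iff₀ h2k]
    nlinarith
  have hcr : ∀ i, c i ≤ r i := by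
    intro i
    rw [hrdef]
    simp only [hjjcast]
    have h1 := Nat.le_ceil (c i * 2 ^ k)
    rw [show ((⌈c i * 2 ^ k⌉₊:ℝ) - 1 + 1) * ((2:ℝ)^k)⁻¹ = (⌈c i * 2 ^ k⌉₊:ℝ) / 2^k from by ring,
      le_div_iff₀ h2k]
    nlinarith
  have hyl : ∀ i, y i < l i := by
    intro i
    rw [hldef]
    simp only [hjjcast]
    have h1 := Nat.le_ceil (c i * 2 ^ k)
    have h2 := hδle i
    have h3 : ((2:ℝ) ^ k)⁻¹ * (2:ℝ)^k = 1 := by field_simp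
    rw [show ((⌈c i * 2 ^ k⌉₊:ℝ) - 1) * ((2:ℝ)^k)⁻¹ = ((⌈c i * 2 ^ k⌉₊:ℝ) - 1) / 2^k from by ring,
      lt_div_iff₀ h2k]
    nlinarith [hmesh]
  have hr1 : ∀ i, r i ≤ 1 := by
    intro i
    rw [hrdef]
    simp only [hjjcast]
    have h1 : (⌈c i * 2 ^ k⌉₊ : ℝ) ≤ 2 ^ k := by
      have : c i * 2^k ≤ ((2^k : ℕ) : ℝ) := by push_cast; nlinarith [hc1 i]
      exact_mod_cast Nat.ceil_le.mpr this
    rw [show ((⌈c i * 2 ^ k⌉₊:ℝ) - 1 + 1) * ((2:ℝ)^k)⁻¹ = (⌈c i * 2 ^ k⌉₊:ℝ) / 2^k from by ring,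
      div_le_one h2k]
    exact h1
  have hl0 : ∀ i, 0 ≤ l i := fun i => le_trans (hcond i).1 (hyl i).le
  have hjlt : ∀ i, jj i < 2 ^ k := by
    intro i
    have h2 : ⌈c i * 2 ^ k⌉₊ ≤ 2 ^ k := by
      apply Nat.ceil_le.mpr
      push_cast
      nlinarith [hc1 i]
    have hj' : jj i = ⌈c i * 2 ^ k⌉₊ - 1 := rfl
    have := hceil_pos i
    omega
  -- strict monotonicity of the dyadic indices
  have hcmono : ∀ i j : Fin m, i < j → c i + ((2:ℝ)^k)⁻¹ < c j := by
    intro i j hij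
    have h1 : c i ≤ x i := hcx i
    have h2 : x i ≤ y j := horder i j hij
    have h3 : y j + δ ≤ c j := by linarith [hδle j]
    linarith [hmesh]
  have hjmono : ∀ i j : Fin m, i < j → jj i < jj j := by
    intro i j hij
    have key : (⌈c i * 2 ^ k⌉₊ : ℝ) < (⌈c j * 2 ^ k⌉₊ : ℝ) := by
      have h1 := Nat.ceil_lt_add_one (by nlinarith [hc0 i] : (0:ℝ) ≤ c i * 2 ^ k)
      have h2 := Nat.le_ceil (c j * 2 ^ k)
      have h3 := hcmono i j hij
      have h4 : ((2:ℝ) ^ k)⁻¹ * (2:ℝ)^k = 1 := by field_simp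
      nlinarith
    have hlt' : ⌈c i * 2 ^ k⌉₊ < ⌈c j * 2 ^ k⌉₊ := by exact_mod_cast key
    have e1 : jj i = ⌈c i * 2 ^ k⌉₊ - 1 := rfl
    have e2 : jj j = ⌈c j * 2 ^ k⌉₊ - 1 := rfl
    have := hceil_pos i
    omega
  have hjinj : Function.Injective jj := by
    intro i j hij
    by_contra h
    rcases lt_or_gt_of_ne h with h' | h'
    · exact absurd hij (Nat.ne_of_lt (hjmono i j h'))
    · exact absurd hij.symm (Nat.ne_of_lt (hjmono j i h'))
  -- each selected dyadic interval gives an indicator value 1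
  have hterm : ∀ i : Fin m,
      cInd f ((jj i : ℝ) * ((2 : ℝ) ^ k)⁻¹) (((jj i : ℝ) + 1) * ((2 : ℝ) ^ k)⁻¹) t = 1 := by
    intro i
    unfold cInd
    rw [Set.indicator_of_mem]
    rw [Set.mem_Ico]
    constructor
    · -- sInf ≤ t since f (c i) ≤ t and c i ∈ [l i, r i]
      have hsub : Set.Icc (l i) (r i) ⊆ Set.Icc (0:ℝ) 1 :=
        Set.Icc_subset_Icc (hl0 i) (hr1 i)
      have hbdd : BddBelow (f '' Set.Icc (l i) (r i)) :=
        (isCompact_Icc.image_of_continuousOn (hc.mono hsub)).bddBelow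
      have hcmem' : c i ∈ Set.Icc (l i) (r i) := ⟨(hlc i).le, hcr i⟩
      calc sInf (f '' Set.Icc (l i) (r i)) ≤ f (c i) := csInf_le hbdd ⟨c i, hcmem', rfl⟩
        _ ≤ t := (hcmem i).2.2
    · exact hlt i (l i) (hyl i).le (hlc i)
  -- sum up
  have : DD f k t ≥ ∑ i : Fin m, (1:ℝ≥0∞) := by
    unfold DD
    rw [show (∑ i : Fin m, (1:ℝ≥0∞))
        = ∑ j ∈ Finset.image jj Finset.univ,
            cInd f ((j : ℝ) * ((2 : ℝ) ^ k)⁻¹) (((j : ℝ) + 1) * ((2 : ℝ) ^ k)⁻¹) t by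
      rw [Finset.sum_image (fun i _ j _ h => hjinj h)]
      exact Finset.sum_congr rfl (fun i _ => (hterm i).symm)]
    apply Finset.sum_le_sum_of_subset
    intro j hj
    rw [Finset.mem_image] at hj
    obtain ⟨i, _, rfl⟩ := hj
    exact Finset.mem_range.mpr (hjlt i)
  calc (m : ℝ≥0∞) = ∑ i : Fin m, (1:ℝ≥0∞) := by simp
    _ ≤ DD f k t := this


lemma exists_config (t : ℝ) (n : ℕ)
    (hcard : ((n:ℕ∞) + 1) ≤ ENat.card (ZerothHomotopy ↥{x ∈ Set.Icc (0:ℝ) 1 | f x ≤ t})) :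
    ∃ x : Fin (n+1) → ℝ, StrictMono x ∧ (∀ i, x i ∈ Set.Icc (0:ℝ) 1 ∧ f (x i) ≤ t) ∧
      ∀ i : Fin n, ∃ yy, x i.castSucc < yy ∧ yy < x i.succ ∧ t < f yy := by
  classical
  set S : Set ℝ := {x ∈ Set.Icc (0:ℝ) 1 | f x ≤ t} with hS
  have hcard' : ((n+1 : ℕ) : ℕ∞) ≤ ENat.card (ZerothHomotopy ↥S) := by
    push_cast
    exact hcard
  obtain ⟨g, hginj⟩ := exists_injective_of_le_card hcard'
  set p : Fin (n+1) → ↥S := fun i => (g i).out with hpdef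
  have hpout : ∀ i, (⟦p i⟧ : ZerothHomotopy ↥S) = g i := fun i => Quotient.out_eq _
  have hjoined : ∀ i j, Joined (p i) (p j) → i = j := by
    intro i j hij
    apply hginj
    rw [← hpout i, ← hpout j]
    exact Quotient.sound hij
  have hpinj : Function.Injective p := by
    intro i j hij
    exact hjoined i j (hij ▸ Joined.refl _)
  set e : Fin (n+1) → ℝ := fun i => (p i : ℝ) with hedef
  have heinj : Function.Injective e := fun i j hij => hpinj (Subtype.ext hij)
  set s : Finset ℝ := Finset.image e Finset.univ with hsdef
  have hcards : s.card = n + 1 := by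
    rw [hsdef, Finset.card_image_of_injective _ heinj, Finset.card_univ, Fintype.card_fin]
  set x : Fin (n+1) → ℝ := fun i => ((Finset.orderIsoOfFin s hcards i : ℝ)) with hxdef
  have hxmono : StrictMono x := by
    intro i j hij
    exact (Finset.orderIsoOfFin s hcards).strictMono hij
  have hxs : ∀ i, x i ∈ s := fun i => (Finset.orderIsoOfFin s hcards i).2
  have hxrep : ∀ i, ∃ j, e j = x i := by
    intro i
    have := hxs i
    rw [hsdef, Finset.mem_image] at this
    obtain ⟨j, _, hj⟩ := this
    exact ⟨j, hj⟩
  have hxS : ∀ i, x i ∈ S := by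
    intro i
    obtain ⟨j, hj⟩ := hxrep i
    rw [← hj]
    exact (p j).2
  have hnotjoined : ∀ i i' (h : x i ≠ x i'),
      ¬ Joined (⟨x i, hxS i⟩ : ↥S) (⟨x i', hxS i'⟩ : ↥S) := by
    intro i i' hne hj
    obtain ⟨j, hjeq⟩ := hxrep i
    obtain ⟨j', hjeq'⟩ := hxrep i'
    have h1 : (⟨x i, hxS i⟩ : ↥S) = p j := Subtype.ext hjeq.symm
    have h2 : (⟨x i', hxS i'⟩ : ↥S) = p j' := Subtype.ext hjeq'.symm
    rw [h1, h2] at hj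
    have := hjoined j j' hj
    apply hne
    rw [← hjeq, ← hjeq', this]
  refine ⟨x, hxmono, fun i => ⟨(hxS i).1, (hxS i).2⟩, ?_⟩
  intro i
  by_contra hno
  push_neg at hno
  set a := x i.castSucc with hadef
  set b := x i.succ with hbdef
  have hab : a < b := hxmono (Fin.castSucc_lt_succ (i := i))
  have hsub : Set.Icc a b ⊆ S := by
    intro z hz
    have hz01 : z ∈ Set.Icc (0:ℝ) 1 :=
      ⟨le_trans (hxS i.castSucc).1.1 hz.1, le_trans hz.2 (hxS i.succ).1.2⟩
    refine ⟨hz01, ?_⟩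
    rcases eq_or_lt_of_le hz.1 with h1 | h1
    · rw [← h1]; exact (hxS i.castSucc).2
    rcases eq_or_lt_of_le hz.2 with h2 | h2
    · rw [h2]; exact (hxS i.succ).2
    exact hno z h1 h2
  have hpc : IsPathConnected (Set.Icc a b) :=
    (convex_Icc a b).isPathConnected ⟨a, Set.left_mem_Icc.mpr hab.le⟩
  have hJ : JoinedIn S a b := by
    have := hpc.joinedIn a (Set.left_mem_Icc.mpr hab.le) b (Set.right_mem_Icc.mpr hab.le)
    exact this.mono hsub
  have := hJ.joined_subtype
  exact hnotjoined i.castSucc i.succ (ne_of_lt hab) (by convert this)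


section FTC

variable (hf : PiecewiseC1Real f)
  (hint : MeasureTheory.IntegrableOn (fun t => |deriv f t|) (Set.Icc 0 1))

/-- The negative part of the derivative. -/
noncomputable def np (f : ℝ → ℝ) : ℝ → ℝ := fun x => max (-deriv f x) 0

/-- The positive part of the derivative. -/
noncomputable def pp (f : ℝ → ℝ) : ℝ → ℝ := fun x => max (deriv f x) 0

lemma measurable_np : Measurable (np f) := ((measurable_deriv f).neg.max measurable_const)

lemma measurable_pp : Measurable (pp f) := ((measurable_deriv f).max measurable_const)

include hint in
lemma integrableOn_deriv : IntegrableOn (deriv f) (Set.Icc 0 1) := by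
  have hm : AEStronglyMeasurable (deriv f) (volume.restrict (Set.Icc (0:ℝ) 1)) :=
    (measurable_deriv f).aestronglyMeasurable
  refine (integrable_norm_iff hm).mp ?_
  simpa [Real.norm_eq_abs, IntegrableOn] using hint

include hint in
lemma integrableOn_np : IntegrableOn (np f) (Set.Icc 0 1) := by
  refine Integrable.mono hint measurable_np.aestronglyMeasurable ?_
  filter_upwards with x
  simp only [np, Real.norm_eq_abs, abs_abs]
  rw [abs_of_nonneg (le_max_right _ _)]
  exact max_le (neg_le_abs _) (abs_nonneg _)

include hint in
lemma integrableOn_pp : IntegrableOn (pp f) (Set.Icc 0 1) := by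
  refine Integrable.mono hint measurable_pp.aestronglyMeasurable ?_
  filter_upwards with x
  simp only [pp, Real.norm_eq_abs, abs_abs]
  rw [abs_of_nonneg (le_max_right _ _)]
  exact max_le (le_abs_self _) (abs_nonneg _)

lemma np_add_pp (x : ℝ) : pp f x + np f x = |deriv f x| := by
  rcases le_total (deriv f x) 0 with h | h
  · simp [pp, np, max_eq_right h, max_eq_left (by linarith : (0:ℝ) ≤ -deriv f x), abs_of_nonpos h]
  · simp [pp, np, max_eq_left h, max_eq_right (by linarith : -deriv f x ≤ 0), abs_of_nonneg h]

include hf hint in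
lemma ftc : ∀ x z : ℝ, x ∈ Set.Icc (0:ℝ) 1 → z ∈ Set.Icc (0:ℝ) 1 → x ≤ z →
    ∫ s in x..z, deriv f s = f z - f x := by
  obtain ⟨hcont, m, u, v, hcov, hC1⟩ := hf
  intro x z hx hz hxz
  set s : Set ℝ := ⋃ i, ({u i} ∪ {v i}) with hs
  have hsc : s.Countable := by
    apply Set.countable_iUnion
    intro i
    exact (Set.countable_singleton _).union (Set.countable_singleton _)
  have hIcc : Set.Icc x z ⊆ Set.Icc (0:ℝ) 1 := Set.Icc_subset_Icc hx.1 hz.2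
  apply MeasureTheory.integral_eq_of_hasDerivAt_off_countable_of_le f (deriv f) hxz hsc
    (hcont.mono hIcc)
  · intro y hy
    obtain ⟨hy1, hy2⟩ := hy
    have hy01 : y ∈ Set.Icc (0:ℝ) 1 := hIcc ⟨hy1.1.le, hy1.2.le⟩
    obtain ⟨S, ⟨i, rfl⟩, hyS⟩ := hcov hy01
    have hyIoo : y ∈ Set.Ioo (u i) (v i) := by
      rcases hyS with ⟨h1, h2⟩
      rcases h1.lt_or_eq with h1 | h1
      · rcases h2.lt_or_eq with h2 | h2
        · exact ⟨h1, h2⟩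
        · exact absurd (Set.mem_iUnion.mpr ⟨i, Or.inr (Set.mem_singleton_iff.mpr h2)⟩) hy2
      · exact absurd (Set.mem_iUnion.mpr ⟨i, Or.inl (Set.mem_singleton_iff.mpr h1.symm)⟩) hy2
    have hdiff : DifferentiableAt ℝ f y := by
      have := (hC1 i).differentiableOn one_ne_zero
      exact (this y hyIoo).differentiableAt (isOpen_Ioo.mem_nhds hyIoo)
    exact hdiff.hasDerivAt
  · apply IntegrableOn.intervalIntegrable
    apply (integrableOn_deriv hint).mono_set
    rwa [Set.uIcc_of_le hxz]

include hf hint in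
lemma drop_le (l r : ℝ) (h0 : 0 ≤ l) (hlr : l ≤ r) (h1 : r ≤ 1) :
    f l - sInf (f '' Set.Icc l r) ≤ ∫ x in Set.Icc l r, np f x := by
  have hIcc : Set.Icc l r ⊆ Set.Icc (0:ℝ) 1 := Set.Icc_subset_Icc h0 h1
  have hnp_int : IntegrableOn (np f) (Set.Icc l r) := (integrableOn_np hint).mono_set hIcc
  have hnonneg : 0 ≤ ∫ x in Set.Icc l r, np f x :=
    setIntegral_nonneg measurableSet_Icc (fun x _ => le_max_right _ _)
  -- min attained
  obtain ⟨zmin, hzmem, hzmin⟩ := isCompact_Icc.exists_isMinOn (Set.nonempty_Icc.2 hlr)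
    (hf.1.mono hIcc)
  have hinf : sInf (f '' Set.Icc l r) = f zmin := by
    apply le_antisymm
    · exact csInf_le ((isCompact_Icc.image_of_continuousOn (hf.1.mono hIcc)).bddBelow)
        ⟨zmin, hzmem, rfl⟩
    · apply le_csInf ((Set.nonempty_Icc.2 hlr).image f)
      rintro y ⟨w, hw, rfl⟩
      exact hzmin hw
  rw [hinf]
  have key : f l - f zmin = ∫ x in l..zmin, -(deriv f x) := by
    rw [intervalIntegral.integral_neg, ftc hf hint l zmin (hIcc ⟨le_rfl, hlr⟩) (hIcc hzmem) hzmem.1]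
    ring
  rw [key]
  have hint1 : IntervalIntegrable (fun x => -(deriv f x)) volume l zmin := by
    apply IntervalIntegrable.neg
    apply IntegrableOn.intervalIntegrable
    apply (integrableOn_deriv hint).mono_set
    rw [Set.uIcc_of_le hzmem.1]
    exact (Set.Icc_subset_Icc le_rfl hzmem.2).trans hIcc
  have hint2 : IntervalIntegrable (np f) volume l zmin := by
    apply IntegrableOn.intervalIntegrable
    apply hnp_int.mono_set
    rw [Set.uIcc_of_le hzmem.1]
    exact (Set.Icc_subset_Icc le_rfl hzmem.2)
  calc ∫ x in l..zmin, -(deriv f x) ≤ ∫ x in l..zmin, np f x := by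
        apply intervalIntegral.integral_mono_on hzmem.1 hint1 hint2
        intro x _
        exact le_max_left _ _
    _ ≤ ∫ x in Set.Icc l r, np f x := by
        rw [intervalIntegral.integral_of_le hzmem.1, ← integral_Icc_eq_integral_Ioc]
        apply setIntegral_mono_set hnp_int
        · filter_upwards with x using le_max_right _ _
        · filter_upwards with x hx using ⟨hx.1, hx.2.trans hzmem.2⟩

include hf hint in
lemma lintegral_DD_le (k : ℕ) :
    ∫⁻ t, DD f k t ≤ ENNReal.ofReal (∫ x in Set.Icc (0:ℝ) 1, np f x) := by
  have h2k : (0:ℝ) < 2 ^ k := by positivity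
  unfold DD
  rw [lintegral_finset_sum _ (fun j _ => measurable_cInd f _ _)]
  have hbound : ∀ j ∈ Finset.range (2^k),
      (∫⁻ t, cInd f (j * ((2 : ℝ) ^ k)⁻¹) ((j + 1) * ((2 : ℝ) ^ k)⁻¹) t)
        ≤ ENNReal.ofReal (∫ x in Set.Icc ((j:ℝ) * ((2 : ℝ) ^ k)⁻¹) (((j:ℝ) + 1) * ((2 : ℝ) ^ k)⁻¹), np f x) := by
    intro j hj
    rw [lintegral_cInd]
    apply ENNReal.ofReal_le_ofReal
    apply drop_le hf hint
    · positivity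
    · nlinarith [inv_pos.mpr h2k]
    · have hj' : (j:ℝ) + 1 ≤ 2^k := by
        have := Finset.mem_range.mp hj
        exact_mod_cast Nat.succ_le_of_lt this
      calc ((j:ℝ)+1) * ((2:ℝ)^k)⁻¹ ≤ (2:ℝ)^k * ((2:ℝ)^k)⁻¹ :=
            mul_le_mul_of_nonneg_right hj' (by positivity)
        _ = 1 := by field_simp
  calc ∑ j ∈ Finset.range (2^k), ∫⁻ t, cInd f (j * ((2 : ℝ) ^ k)⁻¹) ((j + 1) * ((2 : ℝ) ^ k)⁻¹) t
      ≤ ∑ j ∈ Finset.range (2^k), ENNReal.ofReal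
          (∫ x in Set.Icc ((j:ℝ) * ((2 : ℝ) ^ k)⁻¹) (((j:ℝ) + 1) * ((2 : ℝ) ^ k)⁻¹), np f x) :=
        Finset.sum_le_sum hbound
    _ = ENNReal.ofReal (∑ j ∈ Finset.range (2^k),
          ∫ x in Set.Icc ((j:ℝ) * ((2 : ℝ) ^ k)⁻¹) (((j:ℝ) + 1) * ((2 : ℝ) ^ k)⁻¹), np f x) := by
        rw [ENNReal.ofReal_sum_of_nonneg]
        intro j _
        exact setIntegral_nonneg measurableSet_Icc (fun x _ => le_max_right _ _)
    _ ≤ ENNReal.ofReal (∫ x in Set.Icc (0:ℝ) 1, np f x) := by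
        apply ENNReal.ofReal_le_ofReal
        have hIccIoc : ∀ j : ℕ,
            (∫ x in Set.Icc ((j:ℝ) * ((2 : ℝ) ^ k)⁻¹) (((j:ℝ) + 1) * ((2 : ℝ) ^ k)⁻¹), np f x)
            = ∫ x in ((j:ℝ) * ((2 : ℝ) ^ k)⁻¹)..(((j:ℝ) + 1) * ((2 : ℝ) ^ k)⁻¹), np f x := by
          intro j
          rw [intervalIntegral.integral_of_le (by nlinarith [inv_pos.mpr h2k]),
            ← integral_Icc_eq_integral_Ioc]
        simp only [hIccIoc]
        have hintj : ∀ j < 2^k, IntervalIntegrable (np f) volume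
            ((fun (j:ℕ) => (j:ℝ) * ((2 : ℝ) ^ k)⁻¹) j) ((fun (j:ℕ) => (j:ℝ) * ((2 : ℝ) ^ k)⁻¹) (j+1)) := by
          intro j hj
          apply IntegrableOn.intervalIntegrable
          apply (integrableOn_np hint).mono_set
          rw [Set.uIcc_of_le (by push_cast; nlinarith [inv_pos.mpr h2k])]
          apply Set.Icc_subset_Icc
          · positivity
          · simp only []
            have hj' : (j:ℝ) + 1 ≤ 2^k := by exact_mod_cast Nat.succ_le_of_lt hj
            push_cast
            calc ((j:ℝ)+1) * ((2:ℝ)^k)⁻¹ ≤ (2:ℝ)^k * ((2:ℝ)^k)⁻¹ :=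
                  mul_le_mul_of_nonneg_right hj' (by positivity)
              _ = 1 := by field_simp
        have := intervalIntegral.sum_integral_adjacent_intervals (f := np f) (μ := volume)
          (a := fun (j:ℕ) => (j:ℝ) * ((2 : ℝ) ^ k)⁻¹) (n := 2^k) hintj
        have hcast : ∀ j : ℕ, ((j+1:ℕ):ℝ) = (j:ℝ) + 1 := by intro j; push_cast; ring
        simp only [hcast] at this
        rw [this]
        simp only [Nat.cast_zero, zero_mul, Nat.cast_pow, Nat.cast_ofNat]
        rw [show ((2:ℝ)^k) * ((2:ℝ)^k)⁻¹ = 1 by field_simp]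
        rw [intervalIntegral.integral_of_le (by norm_num : (0:ℝ) ≤ 1), ← integral_Icc_eq_integral_Ioc]

end FTC

section Main

variable (hf : PiecewiseC1Real f)
  (hint : MeasureTheory.IntegrableOn (fun t => |deriv f t|) (Set.Icc 0 1))

include hf in
lemma config_crossings (t : ℝ) (n : ℕ)
    (hcard : ((n:ℕ∞) + 1) ≤ ENat.card (ZerothHomotopy ↥{x ∈ Set.Icc (0:ℝ) 1 | f x ≤ t})) :
    ((n : ℝ≥0∞) ≤ ⨆ k, DD f k t) ∧ (t < f 0 → ((n:ℝ≥0∞) + 1 ≤ ⨆ k, DD f k t)) := by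
  have hc := hf.1
  obtain ⟨x, hxmono, hxmem, hsep⟩ := exists_config t n hcard
  choose yy hyy1 hyy2 hyy3 using hsep
  constructor
  · -- n crossings using pairs (yy i, x i.succ)
    apply crossing_count hc t n (fun i => yy i) (fun i => x i.succ)
    · intro i
      refine ⟨le_trans (hxmem i.castSucc).1.1 (hyy1 i).le, hyy2 i, (hxmem i.succ).1.2, hyy3 i,
        (hxmem i.succ).2⟩
    · intro i j hij
      have h1 : x i.succ ≤ x j.castSucc := by
        apply hxmono.monotone
        rw [Fin.le_def]
        simpa using hij
      exact h1.trans (hyy1 j).le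
  · -- n+1 crossings when t < f 0
    intro ht0
    have h0x : 0 < x 0 := by
      rcases (hxmem 0).1.1.lt_or_eq with h | h
      · exact h
      · exfalso
        have := (hxmem 0).2
        rw [← h] at this
        exact absurd this (not_le.mpr ht0)
    have key := crossing_count hc t (n+1)
      (Fin.cases 0 (fun i => yy i)) (fun i => x i) ?_ ?_
    · calc (n:ℝ≥0∞) + 1 = ((n+1 : ℕ) : ℝ≥0∞) := by push_cast; ring
        _ ≤ ⨆ k, DD f k t := key
    · intro i
      induction i using Fin.cases with
      | zero =>
        simp only [Fin.cases_zero]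
        exact ⟨le_rfl, h0x, (hxmem 0).1.2, ht0, (hxmem 0).2⟩
      | succ i =>
        simp only [Fin.cases_succ]
        refine ⟨le_trans (hxmem i.castSucc).1.1 (hyy1 i).le, hyy2 i, (hxmem i.succ).1.2, hyy3 i,
          (hxmem i.succ).2⟩
    · intro i j hij
      induction j using Fin.cases with
      | zero => exact absurd hij (by simp)
      | succ j =>
        simp only [Fin.cases_succ]
        have h1 : x i ≤ x j.castSucc := by
          apply hxmono.monotone
          rw [Fin.le_def]
          have := hij
          rw [Fin.lt_def] at this
          simp only [Fin.val_succ] at this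
          simpa using Nat.lt_succ_iff.mp this
        exact h1.trans (hyy1 j).le

include hf in
lemma card_le_bound (t : ℝ) :
    ((ENat.card (ZerothHomotopy ↥{x ∈ Set.Icc (0:ℝ) 1 | f x ≤ t}) : ℕ∞) : ℝ≥0∞)
      ≤ (Set.Ici (f 0)).indicator (fun _ => 1) t + ⨆ k, DD f k t := by
  rcases eq_or_ne (ENat.card (ZerothHomotopy ↥{x ∈ Set.Icc (0:ℝ) 1 | f x ≤ t})) ⊤ with h | h
  · -- infinite: RHS is ⊤
    have hsup : (⨆ k, DD f k t) = ⊤ := by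
      by_contra hne
      obtain ⟨n, hn⟩ := ENNReal.exists_nat_gt hne
      have := (config_crossings hf t n (by rw [h]; exact le_top)).1
      exact absurd this (not_le.mpr hn)
    rw [hsup]
    simp
  · obtain ⟨n, hn⟩ := WithTop.ne_top_iff_exists.mp h
    rw [← hn]
    cases n with
    | zero => exact (by simp : (((0:ℕ):ℕ∞):ℝ≥0∞) = 0).le.trans zero_le
    | succ m =>
      have hcard : ((m:ℕ∞) + 1) ≤ ENat.card (ZerothHomotopy ↥{x ∈ Set.Icc (0:ℝ) 1 | f x ≤ t}) := by
        rw [← hn]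
        push_cast
        exact le_rfl
      by_cases ht0 : f 0 ≤ t
      · have hind : (Set.Ici (f 0)).indicator (fun _ => (1:ℝ≥0∞)) t = 1 :=
          Set.indicator_of_mem ht0 _
        have hD := (config_crossings hf t m hcard).1
        rw [hind]
        calc ((((m+1:ℕ)):ℕ∞) : ℝ≥0∞) = 1 + (m:ℝ≥0∞) := by push_cast; ring
          _ ≤ 1 + ⨆ k, DD f k t := by exact add_le_add_right hD 1
      · push_neg at ht0
        have hD := (config_crossings hf t m hcard).2 ht0
        calc ((((m+1:ℕ)):ℕ∞) : ℝ≥0∞) = (m:ℝ≥0∞) + 1 := by push_cast; ring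
          _ ≤ ⨆ k, DD f k t := hD
          _ ≤ _ := le_add_self

end Main

end VarProof

theorem integral_components_le_variation (f : ℝ → ℝ) (hf : PiecewiseC1Real f)
    (hint : MeasureTheory.IntegrableOn (fun t => |deriv f t|) (Set.Icc 0 1))
    (a b : ℝ)
    (ha_mem : a ∈ f '' Set.Icc 0 1) (ha_min : ∀ x ∈ Set.Icc (0 : ℝ) 1, a ≤ f x)
    (hb_mem : b ∈ f '' Set.Icc 0 1) (hb_max : ∀ x ∈ Set.Icc (0 : ℝ) 1, f x ≤ b) :
    (∫⁻ t in Set.Icc a b,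
        ((ENat.card (ZerothHomotopy ↥{x ∈ Set.Icc (0 : ℝ) 1 | f x ≤ t}) : ℕ∞) : ℝ≥0∞)) ≤
      ENNReal.ofReal (∫ t in Set.Icc (0 : ℝ) 1, |deriv f t|) ∧
    ∀ᵐ t ∂(MeasureTheory.volume.restrict (Set.Icc a b)),
      ENat.card (ZerothHomotopy ↥{x ∈ Set.Icc (0 : ℝ) 1 | f x ≤ t}) ≠ ⊤ := by
  classical
  open VarProof in
  obtain ⟨x1, hx1, hfx1⟩ := hb_mem
  have h0mem : (0:ℝ) ∈ Set.Icc (0:ℝ) 1 := by norm_num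
  have haf0 : a ≤ f 0 := ha_min 0 h0mem
  have hf0b : f 0 ≤ b := hb_max 0 h0mem
  set B : ℝ → ℝ≥0∞ :=
    fun t => (Set.Ici (f 0)).indicator (fun _ => 1) t + ⨆ k, VarProof.DD f k t with hB
  have hBmeas : Measurable B :=
    ((measurable_const.indicator measurableSet_Ici).add
      (Measurable.iSup (fun k => VarProof.measurable_DD f k)))
  have hpt : ∀ t,
      ((ENat.card (ZerothHomotopy ↥{x ∈ Set.Icc (0 : ℝ) 1 | f x ≤ t}) : ℕ∞) : ℝ≥0∞) ≤ B t :=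
    fun t => VarProof.card_le_bound hf t
  have hIci : ∫⁻ t in Set.Icc a b, (Set.Ici (f 0)).indicator (fun _ => (1:ℝ≥0∞)) t
      = ENNReal.ofReal (b - f 0) := by
    rw [lintegral_indicator measurableSet_Ici, setLIntegral_one,
      Measure.restrict_apply measurableSet_Ici]
    rw [show Set.Ici (f 0) ∩ Set.Icc a b = Set.Icc (f 0) b by
      ext z
      simp only [Set.mem_inter_iff, Set.mem_Ici, Set.mem_Icc]
      constructor
      · rintro ⟨h1, _, h3⟩; exact ⟨h1, h3⟩
      · rintro ⟨h1, h2⟩; exact ⟨h1, haf0.trans h1, h2⟩]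
    rw [Real.volume_Icc]
  have hsupD : (∫⁻ t in Set.Icc a b, (⨆ k, VarProof.DD f k t))
      ≤ ENNReal.ofReal (∫ x in Set.Icc (0:ℝ) 1, VarProof.np f x) := by
    calc (∫⁻ t in Set.Icc a b, (⨆ k, VarProof.DD f k t))
        ≤ ∫⁻ t, ⨆ k, VarProof.DD f k t := setLIntegral_le_lintegral _ _
      _ = ⨆ k, ∫⁻ t, VarProof.DD f k t :=
          lintegral_iSup (fun k => VarProof.measurable_DD f k) (VarProof.DD_mono hf.1)
      _ ≤ ENNReal.ofReal (∫ x in Set.Icc (0:ℝ) 1, VarProof.np f x) :=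
          iSup_le (fun k => VarProof.lintegral_DD_le hf hint k)
  have hbf0 : b - f 0 ≤ ∫ x in Set.Icc (0:ℝ) 1, VarProof.pp f x := by
    have h1 : (∫ s in (0:ℝ)..x1, deriv f s) = f x1 - f 0 :=
      VarProof.ftc hf hint 0 x1 h0mem hx1 hx1.1
    rw [← hfx1, ← h1]
    have hint1 : IntervalIntegrable (deriv f) volume 0 x1 := by
      apply IntegrableOn.intervalIntegrable
      apply (VarProof.integrableOn_deriv hint).mono_set
      rw [Set.uIcc_of_le hx1.1]
      exact Set.Icc_subset_Icc le_rfl hx1.2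
    have hint2 : IntervalIntegrable (VarProof.pp f) volume 0 x1 := by
      apply IntegrableOn.intervalIntegrable
      apply (VarProof.integrableOn_pp hint).mono_set
      rw [Set.uIcc_of_le hx1.1]
      exact Set.Icc_subset_Icc le_rfl hx1.2
    calc (∫ s in (0:ℝ)..x1, deriv f s) ≤ ∫ s in (0:ℝ)..x1, VarProof.pp f s := by
          apply intervalIntegral.integral_mono_on hx1.1 hint1 hint2
          intro x _
          exact le_max_left _ _
      _ ≤ ∫ x in Set.Icc (0:ℝ) 1, VarProof.pp f x := by
          rw [intervalIntegral.integral_of_le hx1.1, ← integral_Icc_eq_integral_Ioc]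
          apply setIntegral_mono_set (VarProof.integrableOn_pp hint)
          · filter_upwards with x using le_max_right _ _
          · filter_upwards with x hx using ⟨hx.1, hx.2.trans hx1.2⟩
  have hppnn : 0 ≤ ∫ x in Set.Icc (0:ℝ) 1, VarProof.pp f x :=
    setIntegral_nonneg measurableSet_Icc (fun x _ => le_max_right _ _)
  have hnpnn : 0 ≤ ∫ x in Set.Icc (0:ℝ) 1, VarProof.np f x :=
    setIntegral_nonneg measurableSet_Icc (fun x _ => le_max_right _ _)
  have hsum : (∫ x in Set.Icc (0:ℝ) 1, VarProof.pp f x)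
      + (∫ x in Set.Icc (0:ℝ) 1, VarProof.np f x)
      = ∫ t in Set.Icc (0:ℝ) 1, |deriv f t| := by
    rw [← integral_add (VarProof.integrableOn_pp hint) (VarProof.integrableOn_np hint)]
    apply integral_congr_ae
    filter_upwards with x
    exact VarProof.np_add_pp x
  have hchain : (∫⁻ t in Set.Icc a b, B t)
      ≤ ENNReal.ofReal (b - f 0)
        + ENNReal.ofReal (∫ x in Set.Icc (0:ℝ) 1, VarProof.np f x) := by
    rw [hB]
    rw [lintegral_add_left (measurable_const.indicator measurableSet_Ici)]
    rw [hIci]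
    exact add_le_add_right hsupD _
  constructor
  · calc (∫⁻ t in Set.Icc a b,
          ((ENat.card (ZerothHomotopy ↥{x ∈ Set.Icc (0 : ℝ) 1 | f x ≤ t}) : ℕ∞) : ℝ≥0∞))
        ≤ ∫⁻ t in Set.Icc a b, B t := lintegral_mono hpt
      _ ≤ ENNReal.ofReal (b - f 0)
          + ENNReal.ofReal (∫ x in Set.Icc (0:ℝ) 1, VarProof.np f x) := hchain
      _ ≤ ENNReal.ofReal (∫ x in Set.Icc (0:ℝ) 1, VarProof.pp f x)
          + ENNReal.ofReal (∫ x in Set.Icc (0:ℝ) 1, VarProof.np f x) :=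
            add_le_add_left (ENNReal.ofReal_le_ofReal hbf0) _
      _ = ENNReal.ofReal ((∫ x in Set.Icc (0:ℝ) 1, VarProof.pp f x)
          + (∫ x in Set.Icc (0:ℝ) 1, VarProof.np f x)) :=
            (ENNReal.ofReal_add hppnn hnpnn).symm
      _ = ENNReal.ofReal (∫ t in Set.Icc (0:ℝ) 1, |deriv f t|) := by rw [hsum]
  · have hfin : (∫⁻ t in Set.Icc a b, B t) ≠ ⊤ := by
      apply ne_of_lt
      apply lt_of_le_of_lt hchain
      exact ENNReal.add_lt_top.mpr ⟨ENNReal.ofReal_lt_top, ENNReal.ofReal_lt_top⟩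
    have hae := ae_lt_top hBmeas hfin
    filter_upwards [hae] with t ht
    intro hcontra
    have h1 := hpt t
    rw [hcontra] at h1
    simp only [ENat.toENNReal_top, top_le_iff] at h1
    exact ht.ne h1
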